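/- The function U(x,t) = ln(((x+t)³ − 3(x+t)² − 6t)/((x+t)³ + 3(x+t)² − 6t)) − t/2 satisfies the dispersive water wave equation U_tt + 2U_t U_xx + 4U_x U_xt + 6U_x² U_xx − U_xxxx = 0 at all points where neither of the two cubic arguments vanishes. -/

import Mathlib

/-- Partial derivative with respect to the first (space) variable. -/
noncomputable def pdx (U : ℝ → ℝ → ℝ) (x t : ℝ) : ℝ := deriv (fun y => U y t) x

/-- Partial derivative with respect to the second (time) variable. -/
noncomputable def pdt (U : ℝ → ℝ → ℝ) (x t : ℝ) : ℝ := deriv (fun s => U x s) t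

/-- The dispersive water wave equation
`U_tt + 2 U_t U_xx + 4 U_x U_xt + 6 U_x² U_xx - U_xxxx = 0` at the point `(x,t)`. -/
def DWWEq (U : ℝ → ℝ → ℝ) (x t : ℝ) : Prop :=
  pdt (pdt U) x t + 2 * pdt U x t * pdx (pdx U) x t
    + 4 * pdx U x t * pdt (pdx U) x t
    + 6 * (pdx U x t) ^ 2 * pdx (pdx U) x t
    - pdx (pdx (pdx (pdx U))) x t = 0

/-- The modified Boussinesq equation
`(1/3) U_tt - 2 U_t U_xx - 6 U_x² U_xx + U_xxxx = 0` at the point `(x,t)`. -/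
def MBQEq (U : ℝ → ℝ → ℝ) (x t : ℝ) : Prop :=
  (1 / 3) * pdt (pdt U) x t - 2 * pdt U x t * pdx (pdx U) x t
    - 6 * (pdx U x t) ^ 2 * pdx (pdx U) x t
    + pdx (pdx (pdx (pdx U))) x t = 0


noncomputable section DWWAux

def Pf (x t : ℝ) : ℝ := (x + t) ^ 3 - 3 * (x + t) ^ 2 - 6 * t
def Qf (x t : ℝ) : ℝ := (x + t) ^ 3 + 3 * (x + t) ^ 2 - 6 * t
def Pxf (x t : ℝ) : ℝ := 3 * (x + t) ^ 2 - 6 * (x + t)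
def Qxf (x t : ℝ) : ℝ := 3 * (x + t) ^ 2 + 6 * (x + t)
def Ptf (x t : ℝ) : ℝ := 3 * (x + t) ^ 2 - 6 * (x + t) - 6
def Qtf (x t : ℝ) : ℝ := 3 * (x + t) ^ 2 + 6 * (x + t) - 6
def Pxxf (x t : ℝ) : ℝ := 6 * (x + t) - 6
def Qxxf (x t : ℝ) : ℝ := 6 * (x + t) + 6

def Uf (x t : ℝ) : ℝ := Real.log (Pf x t / Qf x t) - t / 2

def fUx (x t : ℝ) : ℝ := Pxf x t / Pf x t - Qxf x t / Qf x t
def fUt (x t : ℝ) : ℝ := Ptf x t / Pf x t - Qtf x t / Qf x t - 1 / 2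
def fUxx (x t : ℝ) : ℝ :=
  (Pxxf x t * Pf x t - Pxf x t * Pxf x t) / Pf x t ^ 2
    - (Qxxf x t * Qf x t - Qxf x t * Qxf x t) / Qf x t ^ 2
def fUxt (x t : ℝ) : ℝ :=
  (Pxxf x t * Pf x t - Pxf x t * Ptf x t) / Pf x t ^ 2
    - (Qxxf x t * Qf x t - Qxf x t * Qtf x t) / Qf x t ^ 2
def fUtt (x t : ℝ) : ℝ :=
  (Pxxf x t * Pf x t - Ptf x t * Ptf x t) / Pf x t ^ 2
    - (Qxxf x t * Qf x t - Qtf x t * Qtf x t) / Qf x t ^ 2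
def fUxxx (x t : ℝ) : ℝ :=
  (6 * Pf x t ^ 2 - 3 * (Pf x t * Pxf x t * Pxxf x t) + 2 * Pxf x t ^ 3) / Pf x t ^ 3
    - (6 * Qf x t ^ 2 - 3 * (Qf x t * Qxf x t * Qxxf x t) + 2 * Qxf x t ^ 3) / Qf x t ^ 3
def fUxxxx (x t : ℝ) : ℝ :=
  (-24 * Pf x t ^ 2 * Pxf x t + 12 * Pf x t * Pxf x t ^ 2 * Pxxf x t
      - 3 * Pf x t ^ 2 * Pxxf x t ^ 2 - 6 * Pxf x t ^ 4) / Pf x t ^ 4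
    - (-24 * Qf x t ^ 2 * Qxf x t + 12 * Qf x t * Qxf x t ^ 2 * Qxxf x t
      - 3 * Qf x t ^ 2 * Qxxf x t ^ 2 - 6 * Qxf x t ^ 4) / Qf x t ^ 4

lemma hP_x (x t : ℝ) : HasDerivAt (fun y => Pf y t) (Pxf x t) x := by
  have hs : HasDerivAt (fun y : ℝ => y + t) 1 x := (hasDerivAt_id x).add_const t
  have := ((hs.pow 3).sub ((hs.pow 2).const_mul 3)).sub_const (6 * t)
  unfold Pf Pxf; exact this.congr_deriv (by push_cast; ring)

lemma hQ_x (x t : ℝ) : HasDerivAt (fun y => Qf y t) (Qxf x t) x := by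
  have hs : HasDerivAt (fun y : ℝ => y + t) 1 x := (hasDerivAt_id x).add_const t
  have := (((hs.pow 3).add ((hs.pow 2).const_mul 3)).sub_const (6 * t))
  unfold Qf Qxf; exact this.congr_deriv (by push_cast; ring)

lemma hP_t (x t : ℝ) : HasDerivAt (fun s => Pf x s) (Ptf x t) t := by
  have hs : HasDerivAt (fun s : ℝ => x + s) 1 t := by
    exact (hasDerivAt_id t).const_add x
  have := (((hs.pow 3).sub ((hs.pow 2).const_mul 3)).sub ((hasDerivAt_id t).const_mul 6))
  unfold Pf Ptf; exact this.congr_deriv (by push_cast; ring)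

lemma hQ_t (x t : ℝ) : HasDerivAt (fun s => Qf x s) (Qtf x t) t := by
  have hs : HasDerivAt (fun s : ℝ => x + s) 1 t := by
    exact (hasDerivAt_id t).const_add x
  have := (((hs.pow 3).add ((hs.pow 2).const_mul 3)).sub ((hasDerivAt_id t).const_mul 6))
  unfold Qf Qtf; exact this.congr_deriv (by push_cast; ring)

lemma hPx_x (x t : ℝ) : HasDerivAt (fun y => Pxf y t) (Pxxf x t) x := by
  have hs : HasDerivAt (fun y : ℝ => y + t) 1 x := (hasDerivAt_id x).add_const t
  have := (((hs.pow 2).const_mul 3).sub (hs.const_mul 6))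
  unfold Pxf Pxxf; exact this.congr_deriv (by push_cast; ring)

lemma hQx_x (x t : ℝ) : HasDerivAt (fun y => Qxf y t) (Qxxf x t) x := by
  have hs : HasDerivAt (fun y : ℝ => y + t) 1 x := (hasDerivAt_id x).add_const t
  have := (((hs.pow 2).const_mul 3).add (hs.const_mul 6))
  unfold Qxf Qxxf; exact this.congr_deriv (by push_cast; ring)

lemma hPx_t (x t : ℝ) : HasDerivAt (fun s => Pxf x s) (Pxxf x t) t := by
  have hs : HasDerivAt (fun s : ℝ => x + s) 1 t := by
    exact (hasDerivAt_id t).const_add x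
  have := (((hs.pow 2).const_mul 3).sub (hs.const_mul 6))
  unfold Pxf Pxxf; exact this.congr_deriv (by push_cast; ring)

lemma hQx_t (x t : ℝ) : HasDerivAt (fun s => Qxf x s) (Qxxf x t) t := by
  have hs : HasDerivAt (fun s : ℝ => x + s) 1 t := by
    exact (hasDerivAt_id t).const_add x
  have := (((hs.pow 2).const_mul 3).add (hs.const_mul 6))
  unfold Qxf Qxxf; exact this.congr_deriv (by push_cast; ring)

lemma hPt_t (x t : ℝ) : HasDerivAt (fun s => Ptf x s) (Pxxf x t) t := by
  have := (hPx_t x t).sub_const 6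
  unfold Pxf Ptf at *; convert this using 1

lemma hQt_t (x t : ℝ) : HasDerivAt (fun s => Qtf x s) (Qxxf x t) t := by
  have := (hQx_t x t).sub_const 6
  unfold Qxf Qtf at *; convert this using 1

lemma hPxx_x (x t : ℝ) : HasDerivAt (fun y => Pxxf y t) 6 x := by
  have hs : HasDerivAt (fun y : ℝ => y + t) 1 x := (hasDerivAt_id x).add_const t
  have := (hs.const_mul 6).sub_const 6
  unfold Pxxf; exact this.congr_deriv (by ring)

lemma hQxx_x (x t : ℝ) : HasDerivAt (fun y => Qxxf y t) 6 x := by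
  have hs : HasDerivAt (fun y : ℝ => y + t) 1 x := (hasDerivAt_id x).add_const t
  have := (hs.const_mul 6).add_const 6
  unfold Qxxf; exact this.congr_deriv (by ring)

lemma ev_x {x t : ℝ} (hP : Pf x t ≠ 0) (hQ : Qf x t ≠ 0) :
    ∀ᶠ y in nhds x, Pf y t ≠ 0 ∧ Qf y t ≠ 0 := by
  have cP : Continuous fun y => Pf y t := by unfold Pf; fun_prop
  have cQ : Continuous fun y => Qf y t := by unfold Qf; fun_prop
  exact (cP.continuousAt.eventually_ne hP).and (cQ.continuousAt.eventually_ne hQ)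

lemma ev_t {x t : ℝ} (hP : Pf x t ≠ 0) (hQ : Qf x t ≠ 0) :
    ∀ᶠ s in nhds t, Pf x s ≠ 0 ∧ Qf x s ≠ 0 := by
  have cP : Continuous fun s => Pf x s := by unfold Pf; fun_prop
  have cQ : Continuous fun s => Qf x s := by unfold Qf; fun_prop
  exact (cP.continuousAt.eventually_ne hP).and (cQ.continuousAt.eventually_ne hQ)


lemma pdx_U {x t : ℝ} (hP : Pf x t ≠ 0) (hQ : Qf x t ≠ 0) :
    pdx Uf x t = fUx x t := by
  have hev : (fun y => Uf y t) =ᶠ[nhds x]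
      fun y => Real.log (Pf y t) - Real.log (Qf y t) - t / 2 :=
    (ev_x hP hQ).mono fun y hy => by
      simp only [Uf, Real.log_div hy.1 hy.2]
  rw [pdx, hev.deriv_eq]
  exact ((((hP_x x t).log hP).sub ((hQ_x x t).log hQ)).sub_const (t / 2)).deriv

lemma pdt_U {x t : ℝ} (hP : Pf x t ≠ 0) (hQ : Qf x t ≠ 0) :
    pdt Uf x t = fUt x t := by
  have hev : (fun s => Uf x s) =ᶠ[nhds t]
      fun s => Real.log (Pf x s) - Real.log (Qf x s) - s / 2 :=
    (ev_t hP hQ).mono fun s hs => by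
      simp only [Uf, Real.log_div hs.1 hs.2]
  rw [pdt, hev.deriv_eq]
  have h2 : HasDerivAt (fun s : ℝ => s / 2) (1 / 2 : ℝ) t := by
    simpa using (hasDerivAt_id t).div_const 2
  exact ((((hP_t x t).log hP).sub ((hQ_t x t).log hQ)).sub h2).deriv

lemma pdxx_U {x t : ℝ} (hP : Pf x t ≠ 0) (hQ : Qf x t ≠ 0) :
    pdx (pdx Uf) x t = fUxx x t := by
  have hev : (fun y => pdx Uf y t) =ᶠ[nhds x] fun y => fUx y t :=
    (ev_x hP hQ).mono fun y hy => pdx_U hy.1 hy.2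
  rw [pdx, hev.deriv_eq]
  have h : HasDerivAt (fun y => fUx y t) (fUxx x t) x := by
    have := (((hPx_x x t).div (hP_x x t) hP)).sub (((hQx_x x t).div (hQ_x x t) hQ))
    unfold fUx fUxx; exact this
  exact h.deriv

lemma pdtt_U {x t : ℝ} (hP : Pf x t ≠ 0) (hQ : Qf x t ≠ 0) :
    pdt (pdt Uf) x t = fUtt x t := by
  have hev : (fun s => pdt Uf x s) =ᶠ[nhds t] fun s => fUt x s :=
    (ev_t hP hQ).mono fun s hs => pdt_U hs.1 hs.2
  rw [pdt, hev.deriv_eq]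
  have h : HasDerivAt (fun s => fUt x s) (fUtt x t) t := by
    have := ((((hPt_t x t).div (hP_t x t) hP)).sub
      (((hQt_t x t).div (hQ_t x t) hQ))).sub_const (1 / 2)
    unfold fUt fUtt; exact this
  exact h.deriv

lemma pdtx_U {x t : ℝ} (hP : Pf x t ≠ 0) (hQ : Qf x t ≠ 0) :
    pdt (pdx Uf) x t = fUxt x t := by
  have hev : (fun s => pdx Uf x s) =ᶠ[nhds t] fun s => fUx x s :=
    (ev_t hP hQ).mono fun s hs => pdx_U hs.1 hs.2
  rw [pdt, hev.deriv_eq]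
  have h : HasDerivAt (fun s => fUx x s) (fUxt x t) t := by
    have := (((hPx_t x t).div (hP_t x t) hP)).sub (((hQx_t x t).div (hQ_t x t) hQ))
    unfold fUx fUxt; exact this
  exact h.deriv

lemma pdxxx_U {x t : ℝ} (hP : Pf x t ≠ 0) (hQ : Qf x t ≠ 0) :
    pdx (pdx (pdx Uf)) x t = fUxxx x t := by
  have hev : (fun y => pdx (pdx Uf) y t) =ᶠ[nhds x] fun y => fUxx y t :=
    (ev_x hP hQ).mono fun y hy => pdxx_U hy.1 hy.2
  rw [pdx, hev.deriv_eq]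
  have h : HasDerivAt (fun y => fUxx y t) (fUxxx x t) x := by
    have hNP := ((hPxx_x x t).mul (hP_x x t)).sub ((hPx_x x t).mul (hPx_x x t))
    have hNQ := ((hQxx_x x t).mul (hQ_x x t)).sub ((hQx_x x t).mul (hQx_x x t))
    have := (hNP.div ((hP_x x t).pow 2) (pow_ne_zero 2 hP)).sub
      (hNQ.div ((hQ_x x t).pow 2) (pow_ne_zero 2 hQ))
    unfold fUxx fUxxx; refine this.congr_deriv ?_
    simp only [Pi.pow_apply, Pi.mul_apply, Pi.sub_apply, Pi.add_apply]
    push_cast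
    field_simp
    ring
  exact h.deriv

lemma pdxxxx_U {x t : ℝ} (hP : Pf x t ≠ 0) (hQ : Qf x t ≠ 0) :
    pdx (pdx (pdx (pdx Uf))) x t = fUxxxx x t := by
  have hev : (fun y => pdx (pdx (pdx Uf)) y t) =ᶠ[nhds x] fun y => fUxxx y t :=
    (ev_x hP hQ).mono fun y hy => pdxxx_U hy.1 hy.2
  rw [pdx, hev.deriv_eq]
  have h : HasDerivAt (fun y => fUxxx y t) (fUxxxx x t) x := by
    have hNP := ((((hP_x x t).pow 2).const_mul 6).sub
        ((((hP_x x t).mul (hPx_x x t)).mul (hPxx_x x t)).const_mul 3)).add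
      (((hPx_x x t).pow 3).const_mul 2)
    have hNQ := ((((hQ_x x t).pow 2).const_mul 6).sub
        ((((hQ_x x t).mul (hQx_x x t)).mul (hQxx_x x t)).const_mul 3)).add
      (((hQx_x x t).pow 3).const_mul 2)
    have := (hNP.div ((hP_x x t).pow 3) (pow_ne_zero 3 hP)).sub
      (hNQ.div ((hQ_x x t).pow 3) (pow_ne_zero 3 hQ))
    unfold fUxxx fUxxxx
    refine this.congr_deriv ?_
    simp only [Pi.pow_apply, Pi.mul_apply, Pi.sub_apply, Pi.add_apply]
    push_cast
    field_simp
    ring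
  exact h.deriv

end DWWAux

set_option maxHeartbeats 4000000 in
/-- `U(x,t) = ln(((x+t)³-3(x+t)²-6t)/((x+t)³+3(x+t)²-6t)) - t/2` solves the DWW equation. -/
theorem dww_exact_sol_u2 :
    ∀ x t : ℝ, (x + t) ^ 3 - 3 * (x + t) ^ 2 - 6 * t ≠ 0 →
      (x + t) ^ 3 + 3 * (x + t) ^ 2 - 6 * t ≠ 0 →
      DWWEq (fun x t =>
        Real.log (((x + t) ^ 3 - 3 * (x + t) ^ 2 - 6 * t) /
          ((x + t) ^ 3 + 3 * (x + t) ^ 2 - 6 * t)) - t / 2) x t := by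
  intro x t hP hQ
  have hP' : Pf x t ≠ 0 := hP
  have hQ' : Qf x t ≠ 0 := hQ
  show DWWEq Uf x t
  unfold DWWEq
  rw [pdtt_U hP' hQ', pdt_U hP' hQ', pdxx_U hP' hQ', pdx_U hP' hQ',
    pdtx_U hP' hQ', pdxxxx_U hP' hQ']
  clear hP' hQ'
  unfold fUtt fUt fUxx fUx fUxt fUxxxx Pf Qf Pxf Qxf Ptf Qtf Pxxf Qxxf
  generalize x + t = s at hP hQ ⊢
  have hP2 : s ^ 2 * (s - 3) - 6 * t ≠ 0 := fun h => hP (by linear_combination h)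
  have hQ2 : s ^ 2 * (s + 3) - 6 * t ≠ 0 := fun h => hQ (by linear_combination h)
  field_simp
  ring
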